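/- Let R be a noetherian ring, M a left R-module, and f an R-endomorphism of M. Then for any finitely generated R-submodule X of M, there exists a least non-negative integer η_f(X) such that for all m ≥ η_f(X), the restriction of f to f^m(X) gives an isomorphism f^m(X) → f^{m+1}(X). Moreover, for any R-submodule Y ⊆ X, η_f(Y) ≤ η_f(X). -/
import Mathlib


/-- **Fitting's Lemma (η-version).** Let `R` be a noetherian ring, `M` a left `R`-module and
`f` an `R`-endomorphism of `M`.  For any finitely generated `f`-invariant submodule `X` of `M`
there is a least natural number `η` such that for all `m ≥ η` the restriction of `f` to
`f^m(X)` is an isomorphism `f^m(X) → f^{m+1}(X)` (equivalently, since `f` always maps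
`f^m(X)` onto `f^{m+1}(X)`, `f` is injective on `f^m(X)`).  Moreover for any submodule
`Y ⊆ X` the corresponding least integer for `Y` is at most the one for `X`. -/
theorem fitting_eta (R M : Type*) [Ring R] [IsNoetherianRing R]
    [AddCommGroup M] [Module R M] (f : Module.End R M)
    (X : Submodule R M) (hX : X.FG) (hfX : X.map f ≤ X) :
    ∃ η : ℕ,
      IsLeast {n : ℕ | ∀ m, n ≤ m → Set.InjOn f (X.map (f ^ m) : Set M)} η ∧
      ∀ Y : Submodule R M, Y ≤ X →
        ∃ ηY : ℕ,
          IsLeast {n : ℕ | ∀ m, n ≤ m → Set.InjOn f (Y.map (f ^ m) : Set M)} ηY ∧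
          ηY ≤ η := by
  classical
  have hfX' : ∀ x ∈ X, f x ∈ X := fun x hx => hfX ⟨x, hx, rfl⟩
  set g : X →ₗ[R] X := f.restrict hfX' with hg
  have hpow : ∀ (k : ℕ) (x : X), ((g ^ k) x : M) = (f ^ k) (x : M) := by
    intro k
    induction k with
    | zero => intro x; simp
    | succ k ih =>
      intro x
      rw [pow_succ', pow_succ']
      simp only [Module.End.mul_apply, Module.End.mul_apply]
      rw [hg, LinearMap.restrict_coe_apply, ih]
  haveI : IsNoetherian R X := isNoetherian_of_fg_of_noetherian X hX
  have hker_mono : Monotone fun k : ℕ => LinearMap.ker (g ^ k) := by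
    intro a b hab
    induction b with
    | zero => simp_all
    | succ b ihb =>
      rcases Nat.lt_or_ge a (b + 1) with h | h
      · refine le_trans (ihb (Nat.lt_succ_iff.mp h)) ?_
        intro x hx
        simp only [LinearMap.mem_ker] at hx ⊢
        rw [pow_succ', Module.End.mul_apply, hx, map_zero]
      · have : a = b + 1 := le_antisymm hab h
        subst this; exact le_rfl
  obtain ⟨η, hη⟩ := monotone_stabilizes_iff_noetherian.mpr ‹IsNoetherian R X›
    ⟨fun k : ℕ => LinearMap.ker (g ^ k), hker_mono⟩
  -- key claim: for m ≥ η, f is injective on f^m(X)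
  have key : ∀ m, η ≤ m → Set.InjOn f (X.map (f ^ m) : Set M) := by
    intro m hm y1 hy1 y2 hy2 hfy
    rw [SetLike.mem_coe, Submodule.mem_map] at hy1 hy2
    obtain ⟨x1, hx1, rfl⟩ := hy1
    obtain ⟨x2, hx2, rfl⟩ := hy2
    have hxX : x1 - x2 ∈ X := sub_mem hx1 hx2
    have h1 : (f ^ (m + 1)) (x1 - x2) = 0 := by
      rw [map_sub, pow_succ', Module.End.mul_apply, Module.End.mul_apply, hfy, sub_self]
    have hmem : (⟨x1 - x2, hxX⟩ : X) ∈ LinearMap.ker (g ^ (m + 1)) := by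
      rw [LinearMap.mem_ker]
      apply Subtype.ext
      rw [hpow]
      exact h1
    have heq : LinearMap.ker (g ^ (m + 1)) = LinearMap.ker (g ^ m) := by
      have h1' := hη (m + 1) (le_trans hm (Nat.le_succ m))
      have h2' := hη m hm
      simp only [OrderHom.coe_mk] at h1' h2'
      rw [← h1', ← h2']
    rw [heq, LinearMap.mem_ker] at hmem
    have : (f ^ m) (x1 - x2) = 0 := by
      rw [← hpow m ⟨x1 - x2, hxX⟩, hmem]; rfl
    rw [map_sub, sub_eq_zero] at this
    exact this
  set S : Set ℕ := {n : ℕ | ∀ m, n ≤ m → Set.InjOn f (X.map (f ^ m) : Set M)} with hS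
  have hSne : S.Nonempty := ⟨η, key⟩
  refine ⟨sInf S, ⟨Nat.sInf_mem hSne, fun n hn => Nat.sInf_le hn⟩, ?_⟩
  intro Y hY
  set T : Set ℕ := {n : ℕ | ∀ m, n ≤ m → Set.InjOn f (Y.map (f ^ m) : Set M)} with hT
  have hsub : S ⊆ T := by
    intro n hn m hm
    exact (hn m hm).mono (Set.image_mono hY)
  have hTne : T.Nonempty := hSne.mono hsub
  exact ⟨sInf T, ⟨Nat.sInf_mem hTne, fun n hn => Nat.sInf_le hn⟩,
    Nat.sInf_le (hsub (Nat.sInf_mem hSne))⟩
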